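/- arXiv:0910.1408 — 3 statements merged into one kernel-verified Lean document; each statement's English description precedes it below -/
import Mathlib

section
/- For every even integer m ≥ 0 and every prime p, the rational number p·B_m is p-integral (i.e., the p-adic valuation of p·B_m is nonnegative), where B_m is the m-th Bernoulli number. -/
open Finset

private lemma padicNorm_le_one_iff (p : ℕ) (hp : 1 < p) (q : ℚ) (hq : q ≠ 0) :
    padicNorm p q ≤ 1 ↔ 0 ≤ padicValRat p q := by
  rw [padicNorm.eq_zpow_of_nonzero hq]
  have hp1 : (1 : ℚ) < p := by exact_mod_cast hp
  rw [show (1:ℚ) = (p:ℚ) ^ (0:ℤ) by simp, zpow_le_zpow_iff_right₀ hp1]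
  omega

private lemma norm_pow_div_le (p : ℕ) (hp : p.Prime) (j : ℕ) (hj : 1 ≤ j) :
    padicNorm p ((p : ℚ) ^ j / (j + 1)) ≤ 1 := by
  have hppos : (0:ℚ) < p := by exact_mod_cast hp.pos
  have hx : ((p:ℚ) ^ j / (j + 1)) ≠ 0 := by positivity
  rw [padicNorm_le_one_iff p hp.one_lt _ hx]
  haveI : Fact p.Prime := ⟨hp⟩
  have hj1 : ((j : ℚ) + 1) ≠ 0 := by positivity
  rw [padicValRat.div (pow_ne_zero _ (by exact_mod_cast hp.pos.ne')) hj1]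
  rw [padicValRat.pow (p : ℚ), padicValRat.self hp.one_lt]
  have : ((j : ℚ) + 1) = ((j + 1 : ℕ) : ℚ) := by push_cast; ring
  rw [this, padicValRat.of_nat]
  have hv : padicValNat p (j + 1) ≤ j := by
    have h1 : p ^ padicValNat p (j + 1) ≤ j + 1 :=
      Nat.le_of_dvd (Nat.succ_pos j) pow_padicValNat_dvd
    have h2 : j + 1 ≤ 2 ^ j := Nat.lt_two_pow_self (n := j)
    have h3 : (2:ℕ) ^ j ≤ p ^ j := Nat.pow_le_pow_left hp.two_le j
    exact (Nat.pow_le_pow_iff_right hp.one_lt).mp (h1.trans (h2.trans h3))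
  simp only [mul_one]
  omega

private lemma key (p : ℕ) (hp : p.Prime) : ∀ m : ℕ, padicNorm p ((p:ℚ) * bernoulli m) ≤ 1 := by
  intro m
  induction m using Nat.strong_induction_on with
  | _ m ih =>
    haveI : Fact p.Prime := ⟨hp⟩
    have hm1 : ((m : ℚ) + 1) ≠ 0 := by positivity
    have h := sum_range_pow p m
    rw [Finset.sum_range_succ] at h
    have hlast : bernoulli m * ((m + 1).choose m) * (p:ℚ) ^ (m + 1 - m) / (m + 1)
        = (p:ℚ) * bernoulli m := by
      rw [Nat.choose_succ_self_right, Nat.add_sub_cancel_left]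
      field_simp
      push_cast
      ring
    rw [hlast] at h
    have heq : (p:ℚ) * bernoulli m = (∑ k ∈ range p, (k : ℚ) ^ m)
        - ∑ i ∈ range m, bernoulli i * ((m + 1).choose i) * (p:ℚ) ^ (m + 1 - i) / (m + 1) := by
      linarith [h]
    rw [heq]
    refine le_trans padicNorm.sub (max_le ?_ ?_)
    · have : (∑ k ∈ range p, (k : ℚ) ^ m) = ((∑ k ∈ range p, k ^ m : ℕ) : ℚ) := by push_cast; ring
      rw [this]
      exact padicNorm.of_nat _
    · refine padicNorm.sum_le' (fun i hi => ?_) zero_le_one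
      rw [Finset.mem_range] at hi
      have hterm : bernoulli i * ((m + 1).choose i) * (p:ℚ) ^ (m + 1 - i) / (m + 1)
          = ((p:ℚ) * bernoulli i) * (m.choose i) * ((p:ℚ) ^ (m - i) / ((m - i : ℕ) + 1)) := by
        have hcc : ((m.choose i : ℚ)) * (m + 1) = ((m + 1).choose i : ℚ) * ((m - i : ℕ) + 1) := by
          have := Nat.choose_mul_succ_eq m i
          have h2 : m + 1 - i = (m - i) + 1 := by omega
          rw [h2] at this
          exact_mod_cast this
        have h2 : m + 1 - i = (m - i) + 1 := by omega
        rw [h2]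
        have hd1 : ((m - i : ℕ) : ℚ) + 1 ≠ 0 := by positivity
        field_simp
        linear_combination (-(bernoulli i) * (p:ℚ) * (p:ℚ) ^ (m - i)) * hcc
      rw [hterm]
      rw [padicNorm.mul, padicNorm.mul]
      have h1 := ih i hi
      have h2 : padicNorm p (m.choose i : ℚ) ≤ 1 := padicNorm.of_nat _
      have h3 : padicNorm p ((p:ℚ) ^ (m - i) / ((m - i : ℕ) + 1)) ≤ 1 := by
        have := norm_pow_div_le p hp (m - i) (by omega)
        simpa using this
      have n1 := padicNorm.nonneg (p := p) ((p:ℚ) * bernoulli i)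
      have n2 := padicNorm.nonneg (p := p) ((m.choose i : ℚ))
      have n3 := padicNorm.nonneg (p := p) ((p:ℚ) ^ (m - i) / ((m - i : ℕ) + 1))
      calc padicNorm p ((p:ℚ) * bernoulli i) * padicNorm p ((m.choose i : ℚ))
              * padicNorm p ((p:ℚ) ^ (m - i) / ((m - i : ℕ) + 1))
          ≤ 1 * 1 * 1 := by gcongr
        _ = 1 := by ring

/-- For every even integer `m ≥ 0` and every prime `p`, the rational number `p * B_m`
is `p`-integral, where `B_m` is the `m`-th Bernoulli number. -/
theorem pBernoulli_padic_integral (p m : ℕ) (hp : p.Prime) (hm : Even m) :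
    0 ≤ padicValRat p ((p : ℚ) * bernoulli m) := by
  by_cases h : (p : ℚ) * bernoulli m = 0
  · rw [h, padicValRat.zero]
  · exact (padicNorm_le_one_iff p hp.one_lt _ h).mp (key p hp m)
end

section
/- If p is a prime and m a positive integer with (p−1) ∤ m, then the Bernoulli number B_m is p-integral. -/
open Finset

private lemma padicValNat_le_sub_one {p j : ℕ} (hp : 2 ≤ p) (hj : 1 ≤ j) :
    (padicValNat p j : ℤ) ≤ (j : ℤ) - 1 := by
  have h2 : p ^ padicValNat p j ≤ j := Nat.le_of_dvd hj pow_padicValNat_dvd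
  have h3 : 2 ^ padicValNat p j ≤ j :=
    le_trans (Nat.pow_le_pow_left hp _) h2
  have h4 : padicValNat p j < 2 ^ padicValNat p j := Nat.lt_two_pow_self
  omega

private lemma padicValNat_le_sub_two {p j : ℕ} (hp : 3 ≤ p) (hj : 2 ≤ j) :
    (padicValNat p j : ℤ) ≤ (j : ℤ) - 2 := by
  by_contra h
  have hv : j - 1 ≤ padicValNat p j := by omega
  have h1 : p ^ (j - 1) ≤ j :=
    le_trans (Nat.pow_le_pow_right (by omega) hv)
      (Nat.le_of_dvd (by omega) pow_padicValNat_dvd)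
  have h2 : 3 ^ (j - 1) ≤ j := le_trans (Nat.pow_le_pow_left hp _) h1
  have h3 : j - 1 < 2 ^ (j - 1) := Nat.lt_two_pow_self
  have h4 : 2 ^ (j - 1) < 3 ^ (j - 1) := Nat.pow_lt_pow_left (by norm_num) (by omega)
  omega

private lemma norm_ppow_div (p : ℕ) [hp : Fact p.Prime] (a b : ℕ) (hb : 0 < b) :
    padicNorm p ((p : ℚ) ^ a / (b : ℚ)) = (p : ℚ) ^ ((padicValNat p b : ℤ) - a) := by
  have hp1 : (1 : ℚ) < p := by exact_mod_cast hp.out.one_lt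
  have hppos : (0 : ℚ) < p := by linarith
  have hbq : (b : ℚ) ≠ 0 := by exact_mod_cast hb.ne'
  have hq : ((p : ℚ) ^ a / (b : ℚ)) ≠ 0 := by positivity
  rw [padicNorm.eq_zpow_of_nonzero hq]
  congr 1
  rw [padicValRat.div (by positivity) hbq,
    padicValRat.pow _, padicValRat.self hp.out.one_lt,
    padicValRat.of_nat]
  ring

private lemma choose_id (m i : ℕ) (h : i ≤ m) :
    (m - i + 1) * (m + 1).choose i = (m + 1) * m.choose i := by
  have h1 : m.choose (m - i) = m.choose i := Nat.choose_symm h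
  have h2 := Nat.add_one_mul_choose_eq m (m - i)
  have h3 : (m + 1).choose (m - i + 1) = (m + 1).choose i := by
    rw [← Nat.choose_symm (by omega : i ≤ m + 1)]
    congr 1
    omega
  calc (m - i + 1) * (m + 1).choose i
      = (m + 1).choose (m - i + 1) * (m - i + 1) := by rw [h3, Nat.mul_comm]
    _ = (m + 1) * m.choose (m - i) := h2.symm
    _ = (m + 1) * m.choose i := by rw [h1]

/-- The Faulhaber identity rearranged. -/
private lemma bernoulli_mul_p_eq (p m : ℕ) :
    (p : ℚ) * bernoulli m =
      (∑ k ∈ range p, (k : ℚ) ^ m) -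
        ∑ i ∈ range m, bernoulli i * ((m + 1).choose i) * (p : ℚ) ^ (m + 1 - i) / (m + 1) := by
  have h := sum_range_pow p m
  rw [Finset.sum_range_succ] at h
  have h1 : (m + 1).choose m = m + 1 := Nat.choose_succ_self_right m
  have h2 : m + 1 - m = 1 := by omega
  rw [h1, h2] at h
  have h3 : (m + 1 : ℚ) ≠ 0 := by positivity
  have h4 : bernoulli m * (↑(m + 1)) * (p : ℚ) ^ 1 / (m + 1) = (p : ℚ) * bernoulli m := by
    push_cast
    field_simp
  rw [h4] at h
  linarith [h]

private lemma term_rw (p m i : ℕ) (hi : i < m) :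
    bernoulli i * ((m + 1).choose i) * (p : ℚ) ^ (m + 1 - i) / (m + 1) =
      ((p : ℚ) * bernoulli i) * (m.choose i) * ((p : ℚ) ^ (m - i) / ((m - i + 1) : ℕ)) := by
  have h := choose_id m i hi.le
  have hc : ((m - i + 1 : ℕ) : ℚ) * ((m + 1).choose i : ℚ) = ((m + 1 : ℕ) : ℚ) * (m.choose i : ℚ) := by
    exact_mod_cast congrArg (Nat.cast : ℕ → ℚ) h
  have he : m + 1 - i = (m - i) + 1 := by omega
  rw [he, pow_succ]
  have h1 : ((m : ℚ) + 1) ≠ 0 := by positivity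
  have h2 : ((m - i + 1 : ℕ) : ℚ) ≠ 0 := by positivity
  push_cast at hc ⊢
  field_simp
  linear_combination (bernoulli i * (p : ℚ) ^ (m - i) * (p : ℚ)) * hc

private lemma term_bound (p m i : ℕ) [hp : Fact p.Prime] (hi : i < m)
    (hB : padicNorm p ((p : ℚ) * bernoulli i) ≤ 1) (c : ℤ)
    (hc : (padicValNat p (m - i + 1) : ℤ) - (m - i : ℕ) ≤ c) :
    padicNorm p (bernoulli i * ((m + 1).choose i) * (p : ℚ) ^ (m + 1 - i) / (m + 1)) ≤
      (p : ℚ) ^ c := by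
  have hp1 : (1 : ℚ) < p := by exact_mod_cast hp.out.one_lt
  rw [term_rw p m i hi, padicNorm.mul, padicNorm.mul]
  have hnorm3 : padicNorm p ((p : ℚ) ^ (m - i) / ((m - i + 1 : ℕ) : ℚ)) ≤ (p : ℚ) ^ c := by
    rw [norm_ppow_div p (m - i) (m - i + 1) (by omega)]
    exact zpow_le_zpow_right₀ hp1.le hc
  calc padicNorm p ((p : ℚ) * bernoulli i) * padicNorm p ((m.choose i : ℚ)) *
        padicNorm p ((p : ℚ) ^ (m - i) / ((m - i + 1 : ℕ) : ℚ))
      ≤ 1 * 1 * (p : ℚ) ^ c := by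
        apply mul_le_mul
        · apply mul_le_mul hB (padicNorm.of_nat _) (padicNorm.nonneg _) zero_le_one
        · exact hnorm3
        · exact padicNorm.nonneg _
        · norm_num
    _ = (p : ℚ) ^ c := by ring

private lemma aux_norm (p : ℕ) [hp : Fact p.Prime] (m : ℕ) :
    padicNorm p ((p : ℚ) * bernoulli m) ≤ 1 := by
  induction m using Nat.strong_induction_on with
  | _ m ih =>
    rw [bernoulli_mul_p_eq]
    refine le_trans padicNorm.sub (max_le ?_ ?_)
    · have hS : (∑ k ∈ range p, (k : ℚ) ^ m) = ((∑ k ∈ range p, k ^ m : ℕ) : ℚ) := by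
        push_cast; rfl
      rw [hS]
      exact padicNorm.of_nat _
    · refine padicNorm.sum_le' (fun i him => ?_) zero_le_one
      have hi := mem_range.mp him
      have := term_bound p m i hi (ih i hi) 0
        (by
          have := padicValNat_le_sub_one (p := p) (j := m - i + 1) hp.out.two_le (by omega)
          push_cast at this ⊢
          omega)
      simpa using this

private lemma sum_pow_zmod (p m : ℕ) [hp : Fact p.Prime] (hm : m ≠ 0)
    (hd : ¬ (p - 1) ∣ m) : ∑ x : ZMod p, x ^ m = 0 := by
  classical
  have hcard : Fintype.card (ZMod p) = p := ZMod.card p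
  have hiq : ¬ Fintype.card (ZMod p) - 1 ∣ m := by rwa [hcard]
  let φ : (ZMod p)ˣ ↪ ZMod p := ⟨fun x ↦ x, Units.val_injective⟩
  have huniv : univ.map φ = univ \ {0} := by
    ext x
    simpa only [mem_map, mem_univ, Function.Embedding.coeFn_mk, true_and, mem_sdiff,
      mem_singleton, φ] using
        (show (∃ a : (ZMod p)ˣ, (a : ZMod p) = x) ↔ x ≠ 0 from isUnit_iff_ne_zero)
  calc
    ∑ x : ZMod p, x ^ m = ∑ x ∈ univ \ {(0 : ZMod p)}, x ^ m := by
      rw [← sum_sdiff ({0} : Finset (ZMod p)).subset_univ, sum_singleton, zero_pow hm, add_zero]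
    _ = ∑ x : (ZMod p)ˣ, ((x : ZMod p)) ^ m := by simp [φ, ← huniv, univ.sum_map φ]
    _ = 0 := by rw [FiniteField.sum_pow_units (ZMod p) m, if_neg hiq]

private lemma p_dvd_sum (p m : ℕ) [hp : Fact p.Prime] (hm : m ≠ 0)
    (hd : ¬ (p - 1) ∣ m) : p ∣ ∑ k ∈ range p, k ^ m := by
  haveI : NeZero p := ⟨hp.out.pos.ne'⟩
  rw [← ZMod.natCast_eq_zero_iff]
  push_cast
  rw [show (∑ k ∈ range p, (k : ZMod p) ^ m) = ∑ x : ZMod p, x ^ m from ?_,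
    sum_pow_zmod p m hm hd]
  refine Finset.sum_nbij' (fun k => ((k : ZMod p))) (fun x => x.val) ?_ ?_ ?_ ?_ ?_
  · intro a _; exact mem_univ _
  · intro x _; exact mem_range.mpr (ZMod.val_lt x)
  · intro a ha; exact ZMod.val_cast_of_lt (mem_range.mp ha)
  · intro x _; exact ZMod.natCast_zmod_val x
  · intro a _; rfl

/-- If `p` is a prime and `m` a positive integer with `(p-1) ∤ m`, then the
Bernoulli number `B_m` is `p`-integral. -/
theorem bernoulli_padic_integral (p m : ℕ) (hp : p.Prime) (hm : 0 < m)
    (hdvd : ¬ (p - 1) ∣ m) :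
    0 ≤ padicValRat p (bernoulli m) := by
  haveI : Fact p.Prime := ⟨hp⟩
  by_cases hB : bernoulli m = 0
  · simp [hB]
  have hp3 : 3 ≤ p := by
    rcases hp.two_le.lt_or_eq with h | h
    · omega
    · exfalso; apply hdvd; rw [← h]; exact one_dvd m
  have hp1 : (1 : ℚ) < p := by exact_mod_cast hp.one_lt
  have hppos : (0 : ℚ) < p := by linarith
  -- main norm estimate
  have hmain : padicNorm p ((p : ℚ) * bernoulli m) ≤ (p : ℚ) ^ (-1 : ℤ) := by
    rw [bernoulli_mul_p_eq]
    refine le_trans padicNorm.sub (max_le ?_ ?_)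
    · have hS : (∑ k ∈ range p, (k : ℚ) ^ m) = (((∑ k ∈ range p, k ^ m : ℕ) : ℤ) : ℚ) := by
        push_cast; rfl
      have hdvdz : (↑(p ^ 1) : ℤ) ∣ ((∑ k ∈ range p, k ^ m : ℕ) : ℤ) := by
        rw [pow_one]
        exact_mod_cast Int.natCast_dvd_natCast.mpr (p_dvd_sum p m hm.ne' hdvd)
      have hnorm := (padicNorm.dvd_iff_norm_le (p := p)).mp hdvdz
      rw [hS]
      simpa using hnorm
    · refine padicNorm.sum_le' (fun i him => ?_) (by positivity)
      have hi := mem_range.mp him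
      exact term_bound p m i hi (aux_norm p i) (-1)
        (by
          have := padicValNat_le_sub_two (p := p) (j := m - i + 1) hp3 (by omega)
          push_cast at this ⊢
          omega)
  -- deduce padicNorm p (bernoulli m) ≤ 1
  have hnb : padicNorm p (bernoulli m) ≤ 1 := by
    rw [padicNorm.mul, padicNorm.padicNorm_p_of_prime] at hmain
    rw [zpow_neg, zpow_one] at hmain
    have hinv : (0 : ℚ) < (p : ℚ)⁻¹ := by positivity
    calc padicNorm p (bernoulli m) = (p : ℚ) * ((p : ℚ)⁻¹ * padicNorm p (bernoulli m)) := by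
          field_simp
      _ ≤ (p : ℚ) * (p : ℚ)⁻¹ := by
          apply mul_le_mul_of_nonneg_left hmain (by linarith)
      _ = 1 := by field_simp
  -- convert to valuation
  by_contra hlt
  push_neg at hlt
  have h1 : (1 : ℤ) ≤ -padicValRat p (bernoulli m) := by omega
  have := zpow_le_zpow_right₀ hp1.le h1
  rw [zpow_one] at this
  rw [padicNorm.eq_zpow_of_nonzero hB] at hnb
  linarith
end

section
/- Let χ be a Dirichlet character of conductor f and let g be any positive multiple of f. Then for every n ≥ 0, the generalized Bernoulli number satisfies B_{n,χ} = g^{n−1} · Σ_{a=1}^{g} χ(a)·B_n(a/g), where B_n(X) is the n-th Bernoulli polynomial. -/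
open PowerSeries Polynomial Finset Nat

private noncomputable def bernGF (x : ℂ) : PowerSeries ℂ :=
  PowerSeries.mk fun n => Polynomial.aeval x ((1 / n ! : ℚ) • Polynomial.bernoulli n)

private lemma bernGF_mul : ∀ x : ℂ, bernGF x * (PowerSeries.exp ℂ - 1)
    = PowerSeries.X * PowerSeries.rescale x (PowerSeries.exp ℂ) :=
  Polynomial.bernoulli_generating_function

private lemma rescale_exp_pow (a : ℂ) (k : ℕ) :
    PowerSeries.rescale a (PowerSeries.exp ℂ) ^ k
      = PowerSeries.rescale (k * a) (PowerSeries.exp ℂ) := by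
  induction k with
  | zero =>
      rw [pow_zero, Nat.cast_zero, zero_mul, PowerSeries.rescale_zero]
      simp [PowerSeries.constantCoeff_exp]
  | succ k ih =>
      rw [pow_succ, ih, PowerSeries.exp_mul_exp_eq_exp_add]
      push_cast
      ring_nf

private lemma bern_mult (m : ℕ) (hm : 0 < m) (x : ℂ) (n : ℕ) :
    ∑ j ∈ Finset.range m, Polynomial.aeval ((x + j) / m) (Polynomial.bernoulli n)
      = (m : ℂ) ^ ((1 : ℤ) - n) * Polynomial.aeval x (Polynomial.bernoulli n) := by
  have hm0 : (m : ℂ) ≠ 0 := Nat.cast_ne_zero.mpr hm.ne'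
  set e : PowerSeries ℂ := PowerSeries.rescale (m : ℂ)⁻¹ (PowerSeries.exp ℂ) with he
  set S : PowerSeries ℂ := ∑ j ∈ Finset.range m, e ^ j with hS
  have hem : e ^ m = PowerSeries.exp ℂ := by
    rw [he, rescale_exp_pow, mul_inv_cancel₀ hm0, PowerSeries.rescale_one, RingHom.id_apply]
  have hS0 : S ≠ 0 := by
    intro h
    have h0 : PowerSeries.constantCoeff S = 0 := by rw [h]; simp
    rw [hS, map_sum] at h0
    have : ∀ j ∈ Finset.range m, PowerSeries.constantCoeff (e ^ j) = 1 := by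
      intro j _
      rw [map_pow, he]
      rw [← PowerSeries.coeff_zero_eq_constantCoeff_apply, PowerSeries.coeff_rescale,
        PowerSeries.coeff_zero_eq_constantCoeff_apply, PowerSeries.constantCoeff_exp]
      simp
    rw [Finset.sum_congr rfl this] at h0
    simp only [Finset.sum_const, Finset.card_range, nsmul_eq_mul, mul_one] at h0
    exact hm0 h0
  have he1 : e - 1 ≠ 0 := by
    intro h
    have h1 : PowerSeries.coeff 1 (e - 1) = 0 := by rw [h]; simp
    rw [map_sub, he, PowerSeries.coeff_rescale, PowerSeries.coeff_exp] at h1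
    simp only [PowerSeries.coeff_one, one_ne_zero, if_false, sub_zero] at h1
    rw [pow_one, Nat.factorial_one] at h1
    simp only [Nat.cast_one, div_one, map_one, mul_one] at h1
    exact inv_ne_zero hm0 h1
  set G : PowerSeries ℂ := ∑ j ∈ Finset.range m, bernGF ((x + j) / m) with hG
  -- generating function computation
  have key1 : G * (PowerSeries.exp ℂ - 1)
      = PowerSeries.X * PowerSeries.rescale (x / m) (PowerSeries.exp ℂ) * S := by
    rw [hG, Finset.sum_mul]
    have : ∀ j ∈ Finset.range m, bernGF ((x + j) / m) * (PowerSeries.exp ℂ - 1)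
        = PowerSeries.X * PowerSeries.rescale (x / m) (PowerSeries.exp ℂ) * e ^ j := by
      intro j _
      rw [bernGF_mul, rescale_exp_pow, mul_assoc, PowerSeries.exp_mul_exp_eq_exp_add]
      congr 2
      field_simp
    rw [Finset.sum_congr rfl this, ← Finset.mul_sum, ← hS]
  have key2 : (PowerSeries.exp ℂ - 1) = S * (e - 1) := by
    rw [hS, geom_sum_mul, hem]
  set Hs : PowerSeries ℂ :=
    PowerSeries.C (m : ℂ) * PowerSeries.rescale (m : ℂ)⁻¹ (bernGF x) with hHs
  have keyH : Hs * (e - 1) = PowerSeries.X * PowerSeries.rescale (x / m) (PowerSeries.exp ℂ) := by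
    have hr : PowerSeries.rescale (m : ℂ)⁻¹ (bernGF x) * (e - 1)
        = PowerSeries.rescale (m : ℂ)⁻¹ (bernGF x * (PowerSeries.exp ℂ - 1)) := by
      rw [map_mul, map_sub, map_one, he]
    rw [hHs, mul_assoc, hr, bernGF_mul, map_mul, PowerSeries.rescale_rescale,
      PowerSeries.rescale_X]
    rw [div_eq_mul_inv x (m : ℂ)]
    ring_nf
    rw [← map_mul, mul_inv_cancel₀ hm0, map_one, one_mul]
  have hGH : G = Hs := by
    have h1 : G * (e - 1) * S = Hs * (e - 1) * S := by
      rw [keyH]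
      calc G * (e - 1) * S = G * (S * (e - 1)) := by ring
        _ = G * (PowerSeries.exp ℂ - 1) := by rw [← key2]
        _ = PowerSeries.X * PowerSeries.rescale (x / m) (PowerSeries.exp ℂ) * S := key1
    have h2 := mul_right_cancel₀ hS0 h1
    exact mul_right_cancel₀ he1 h2
  -- compare coefficients of X^n
  have hcoeff := congrArg (PowerSeries.coeff n) hGH
  rw [hG, hHs, map_sum, PowerSeries.coeff_C_mul, PowerSeries.coeff_rescale] at hcoeff
  simp only [bernGF, PowerSeries.coeff_mk] at hcoeff
  have haev : ∀ t : ℂ, Polynomial.aeval t ((1 / n ! : ℚ) • Polynomial.bernoulli n)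
      = algebraMap ℚ ℂ (1 / n !) * Polynomial.aeval t (Polynomial.bernoulli n) := by
    intro t
    rw [map_smul, Algebra.smul_def]
  simp only [haev] at hcoeff
  rw [← Finset.mul_sum] at hcoeff
  have hc0 : (algebraMap ℚ ℂ) (1 / n !) ≠ 0 := by
    rw [map_div₀, map_one, map_natCast]
    exact one_div_ne_zero (Nat.cast_ne_zero.mpr n.factorial_ne_zero)
  have hre : (m : ℂ) * ((m : ℂ)⁻¹ ^ n *
        ((algebraMap ℚ ℂ) (1 / n !) * Polynomial.aeval x (Polynomial.bernoulli n)))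
      = (algebraMap ℚ ℂ) (1 / n !) *
        ((m : ℂ) ^ ((1 : ℤ) - n) * Polynomial.aeval x (Polynomial.bernoulli n)) := by
    rw [zpow_sub₀ hm0, zpow_one, zpow_natCast, div_eq_mul_inv, inv_pow]
    ring
  rw [hre] at hcoeff
  exact mul_left_cancel₀ hc0 hcoeff

/-- The `n`-th generalized Bernoulli number of a Dirichlet character `χ` modulo `f`,
defined by `B_{n,χ} = f^(n-1) · ∑_{a=1}^{f} χ(a) · B_n(a/f)`, which is the closed
formula arising from the generating function
`∑_{a=1}^{f} χ(a) t e^{at}/(e^{ft}-1) = ∑_{n≥0} B_{n,χ} t^n/n!`. -/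
noncomputable def genBernoulli {f : ℕ} (χ : DirichletCharacter ℂ f) (n : ℕ) : ℂ :=
  (f : ℂ) ^ ((n : ℤ) - 1) *
    ∑ a ∈ Finset.range f, χ (a + 1 : ℕ) *
      Polynomial.aeval (((a : ℂ) + 1) / (f : ℂ)) (Polynomial.bernoulli n)

/-- If `χ` is a Dirichlet character of conductor `f` and `g` is any positive multiple
of `f`, then `B_{n,χ} = g^(n-1) · ∑_{a=1}^{g} χ(a) · B_n(a/g)` for all `n ≥ 0`. -/
theorem genBernoulli_eq_of_dvd {f : ℕ} (hf : 0 < f) (χ : DirichletCharacter ℂ f)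
    (hχ : χ.conductor = f) (g : ℕ) (hg : 0 < g) (hfg : f ∣ g) (n : ℕ) :
    genBernoulli χ n =
      (g : ℂ) ^ ((n : ℤ) - 1) *
        ∑ a ∈ Finset.range g, χ (a + 1 : ℕ) *
          Polynomial.aeval (((a : ℂ) + 1) / (g : ℂ)) (Polynomial.bernoulli n) := by
  obtain ⟨m, hm⟩ := hfg
  have hm0 : 0 < m := Nat.pos_of_ne_zero fun h => by simp [h, hm] at hg
  subst hm
  have hf0 : (f : ℂ) ≠ 0 := Nat.cast_ne_zero.mpr hf.ne'
  have hmc0 : (m : ℂ) ≠ 0 := Nat.cast_ne_zero.mpr hm0.ne'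
  have hsplit : ∑ a ∈ Finset.range (f * m), χ (a + 1 : ℕ) *
        Polynomial.aeval (((a : ℂ) + 1) / ((f * m : ℕ) : ℂ)) (Polynomial.bernoulli n)
      = ∑ p ∈ Finset.range m ×ˢ Finset.range f, χ (p.1 * f + p.2 + 1 : ℕ) *
        Polynomial.aeval ((((p.1 * f + p.2 : ℕ) : ℂ) + 1) / ((f * m : ℕ) : ℂ))
          (Polynomial.bernoulli n) := by
    refine Finset.sum_nbij' (fun a => (a / f, a % f)) (fun p => p.1 * f + p.2) ?_ ?_ ?_ ?_ ?_
    · intro a ha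
      simp only [Finset.mem_range] at ha
      simp only [Finset.mem_product, Finset.mem_range]
      exact ⟨Nat.div_lt_of_lt_mul (by omega), Nat.mod_lt _ hf⟩
    · intro p hp
      simp only [Finset.mem_product, Finset.mem_range] at hp
      simp only [Finset.mem_range]
      calc p.1 * f + p.2 < p.1 * f + f := by omega
        _ = (p.1 + 1) * f := by ring
        _ ≤ m * f := Nat.mul_le_mul_right _ hp.1
        _ = f * m := mul_comm _ _
    · intro a _
      exact Nat.div_add_mod' a f
    · intro p hp
      simp only [Finset.mem_product, Finset.mem_range] at hp
      have h1 : (p.1 * f + p.2) / f = p.1 := by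
        rw [add_comm, Nat.add_mul_div_right _ _ hf, Nat.div_eq_of_lt hp.2, zero_add]
      have h2 : (p.1 * f + p.2) % f = p.2 := by
        rw [add_comm, Nat.add_mul_mod_self_right, Nat.mod_eq_of_lt hp.2]
      rw [h1, h2]
    · intro a _
      dsimp only
      rw [Nat.div_add_mod' a f]
  rw [hsplit, Finset.sum_product]
  have hterm : ∀ j ∈ Finset.range m, ∀ b ∈ Finset.range f,
      χ (j * f + b + 1 : ℕ) * Polynomial.aeval ((((j * f + b : ℕ) : ℂ) + 1) / ((f * m : ℕ) : ℂ))
          (Polynomial.bernoulli n)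
        = χ (b + 1 : ℕ) * Polynomial.aeval (((((b : ℂ) + 1) / (f : ℂ)) + j) / (m : ℂ))
          (Polynomial.bernoulli n) := by
    intro j _ b _
    congr 1
    · congr 1
      push_cast
      simp [ZMod.natCast_self]
    · congr 1
      push_cast
      field_simp
      ring_nf
  rw [Finset.sum_congr rfl fun j hj => Finset.sum_congr rfl fun b hb => hterm j hj b hb]
  rw [Finset.sum_comm]
  have hinner : ∀ b ∈ Finset.range f,
      ∑ j ∈ Finset.range m, χ (b + 1 : ℕ) *
          Polynomial.aeval (((((b : ℂ) + 1) / (f : ℂ)) + j) / (m : ℂ)) (Polynomial.bernoulli n)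
        = χ (b + 1 : ℕ) * ((m : ℂ) ^ ((1 : ℤ) - n) *
          Polynomial.aeval (((b : ℂ) + 1) / (f : ℂ)) (Polynomial.bernoulli n)) := by
    intro b _
    rw [← Finset.mul_sum, bern_mult m hm0 _ n]
  rw [Finset.sum_congr rfl hinner]
  simp_rw [← mul_assoc, mul_comm (χ (_ + 1 : ℕ)) ((m : ℂ) ^ ((1 : ℤ) - n)), mul_assoc,
    ← Finset.mul_sum]
  rw [genBernoulli, ← mul_assoc]
  congr 1
  push_cast
  rw [mul_zpow, mul_assoc, ← zpow_add₀ hmc0]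
  norm_num
end
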